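/- Let α, β, γ, δ, μ be real constants, and on the interval (1,∞) define A = B = C = 0, D(x) = β/ln x, E(x) = −β + γ/ln x, G(x) = 1/ln x, L(x) = αβ + 2β² + δ·ln x − βγ/ln x, M(x) = αγ + 3βγ + μ·ln x − δ·(ln x)² − γ²/ln x, N(x) = α + β − γ/ln x. Then these functions satisfy the system D′ = DB + LC − AE − DG, L′ = DE + LG − AM − DN, E′ = MC − EG − D, M′ = E² + MG − BM − EN − L, G′ = GB + NC − CE − G² + A, N′ = GE − CM + D on (1,∞), where F′ denotes x·(dF/dx). -/

import Mathlib

/-- The explicit functions (43) of the paper, with `A = B = C = 0`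
(nilpotent `P₁`), solve the central system (42) on `(1,∞)`, where `F′` denotes
the Euler derivative `x·(dF/dx)`. -/
theorem stmt_3 (α β γ δ μ : ℝ) (A B C D E G L M N : ℝ → ℝ)
    (hA : A = fun _ => (0:ℝ)) (hB : B = fun _ => (0:ℝ)) (hC : C = fun _ => (0:ℝ))
    (hD : D = fun x => β / Real.log x)
    (hE : E = fun x => -β + γ / Real.log x)
    (hG : G = fun x => 1 / Real.log x)
    (hL : L = fun x => α * β + 2 * β ^ 2 + δ * Real.log x - β * γ / Real.log x)
    (hM : M = fun x => α * γ + 3 * β * γ + μ * Real.log x - δ * (Real.log x) ^ 2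
      - γ ^ 2 / Real.log x)
    (hN : N = fun x => α + β - γ / Real.log x) :
    ∀ x, 1 < x →
      x * deriv D x = D x * B x + L x * C x - A x * E x - D x * G x ∧
      x * deriv L x = D x * E x + L x * G x - A x * M x - D x * N x ∧
      x * deriv E x = M x * C x - E x * G x - D x ∧
      x * deriv M x = E x ^ 2 + M x * G x - B x * M x - E x * N x - L x ∧
      x * deriv G x = G x * B x + N x * C x - C x * E x - G x ^ 2 + A x ∧
      x * deriv N x = G x * E x - C x * M x + D x := by
  subst hA hB hC hD hE hG hL hM hN
  intro x hx
  have hx0 : x ≠ 0 := by positivity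
  have hlpos : 0 < Real.log x := Real.log_pos hx
  have hlx : Real.log x ≠ 0 := ne_of_gt hlpos
  have hlog : HasDerivAt Real.log x⁻¹ x := Real.hasDerivAt_log hx0
  have hDd : HasDerivAt (fun x => β / Real.log x)
      ((0 * Real.log x - β * x⁻¹) / Real.log x ^ 2) x :=
    (hasDerivAt_const x β).div hlog hlx
  have hEd : HasDerivAt (fun x => -β + γ / Real.log x)
      (0 + (0 * Real.log x - γ * x⁻¹) / Real.log x ^ 2) x :=
    (hasDerivAt_const x (-β)).add ((hasDerivAt_const x γ).div hlog hlx)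
  have hGd : HasDerivAt (fun x => 1 / Real.log x)
      ((0 * Real.log x - 1 * x⁻¹) / Real.log x ^ 2) x :=
    (hasDerivAt_const x 1).div hlog hlx
  have hLd : HasDerivAt (fun x => α * β + 2 * β ^ 2 + δ * Real.log x - β * γ / Real.log x)
      (0 + δ * x⁻¹ - (0 * Real.log x - β * γ * x⁻¹) / Real.log x ^ 2) x :=
    (((hasDerivAt_const x (α * β + 2 * β ^ 2)).add (hlog.const_mul δ)).sub
      ((hasDerivAt_const x (β * γ)).div hlog hlx))
  have hMd : HasDerivAt (fun x => α * γ + 3 * β * γ + μ * Real.log x - δ * Real.log x ^ 2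
        - γ ^ 2 / Real.log x)
      (0 + μ * x⁻¹ - δ * (2 * Real.log x ^ 1 * x⁻¹)
        - (0 * Real.log x - γ ^ 2 * x⁻¹) / Real.log x ^ 2) x :=
    ((((hasDerivAt_const x (α * γ + 3 * β * γ)).add (hlog.const_mul μ)).sub
      ((hlog.pow 2).const_mul δ)).sub ((hasDerivAt_const x (γ ^ 2)).div hlog hlx))
  have hNd : HasDerivAt (fun x => α + β - γ / Real.log x)
      (0 - (0 * Real.log x - γ * x⁻¹) / Real.log x ^ 2) x :=
    (hasDerivAt_const x (α + β)).sub ((hasDerivAt_const x γ).div hlog hlx)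
  refine ⟨?_, ?_, ?_, ?_, ?_, ?_⟩
  · rw [hDd.deriv]; field_simp; ring
  · rw [hLd.deriv]; field_simp; ring
  · rw [hEd.deriv]; field_simp; ring
  · rw [hMd.deriv]; field_simp; ring
  · rw [hGd.deriv]; field_simp; ring
  · rw [hNd.deriv]; field_simp; ring
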